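/- arXiv:2204.11727 — 5 statements merged into one kernel-verified Lean document; each statement's English description precedes it below -/
import Mathlib

section
/- The Haagerup set is invariant under equivalence of matrices: if H₁ = D₁ P₁ H₂ P₂ D₂ for diagonal unitary matrices D₁, D₂ and permutation matrices P₁, P₂ (all of order N), then Λ(H₁) = Λ(H₂). -/
open Matrix

/-- The Haagerup set `Λ(H) = { H_{jk}·H_{lm}·conj(H_{jm})·conj(H_{lk}) }`. -/
def HaagerupSet {N : ℕ} (H : Matrix (Fin N) (Fin N) ℂ) : Set ℂ :=
  {z | ∃ j k l m : Fin N,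
    z = H j k * H l m * (starRingEnd ℂ) (H j m) * (starRingEnd ℂ) (H l k)}

/-- `P` is a permutation matrix. -/
def IsPermMatrix {N : ℕ} (P : Matrix (Fin N) (Fin N) ℂ) : Prop :=
  ∃ σ : Equiv.Perm (Fin N), ∀ i j, P i j = if σ i = j then 1 else 0

/-- `D` is a diagonal unitary matrix. -/
def IsDiagUnitary {N : ℕ} (D : Matrix (Fin N) (Fin N) ℂ) : Prop :=
  D.IsDiag ∧ D * Dᴴ = 1

lemma entry_aux {N : ℕ} (H D₁ D₂ P₁ P₂ : Matrix (Fin N) (Fin N) ℂ)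
    (hd1 : D₁.IsDiag) (hd2 : D₂.IsDiag) (σ₁ σ₂ : Equiv.Perm (Fin N))
    (hp1 : ∀ i j, P₁ i j = if σ₁ i = j then 1 else 0)
    (hp2 : ∀ i j, P₂ i j = if σ₂ i = j then 1 else 0)
    (j k : Fin N) :
    (D₁ * P₁ * H * P₂ * D₂) j k = D₁ j j * H (σ₁ j) (σ₂.symm k) * D₂ k k := by
  have h1 : ∀ (A : Matrix (Fin N) (Fin N) ℂ), (D₁ * A) j k = D₁ j j * A j k := by
    intro A
    rw [mul_apply]
    rw [Finset.sum_eq_single j]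
    · intro b _ hb; rw [hd1 hb.symm, zero_mul]
    · intro hj; exact absurd (Finset.mem_univ j) hj
  have h2 : ∀ (A : Matrix (Fin N) (Fin N) ℂ), (A * D₂) j k = A j k * D₂ k k := by
    intro A
    rw [mul_apply]
    rw [Finset.sum_eq_single k]
    · intro b _ hb; rw [hd2 hb, mul_zero]
    · intro hk; exact absurd (Finset.mem_univ k) hk
  have h3 : ∀ (A : Matrix (Fin N) (Fin N) ℂ), (P₁ * A) j k = A (σ₁ j) k := by
    intro A
    rw [mul_apply]
    rw [Finset.sum_eq_single (σ₁ j)]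
    · rw [hp1, if_pos rfl, one_mul]
    · intro b _ hb; rw [hp1, if_neg (Ne.symm hb), zero_mul]
    · intro hj; exact absurd (Finset.mem_univ _) hj
  have h4 : ∀ (A : Matrix (Fin N) (Fin N) ℂ) (j k), (A * P₂) j k = A j (σ₂.symm k) := by
    intro A j k
    rw [mul_apply]
    rw [Finset.sum_eq_single (σ₂.symm k)]
    · rw [hp2, if_pos (σ₂.apply_symm_apply k), mul_one]
    · intro b _ hb
      rw [hp2, if_neg, mul_zero]
      intro hc; exact hb (by rw [← hc, Equiv.symm_apply_apply])
    · intro hj; exact absurd (Finset.mem_univ _) hj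
  rw [show D₁ * P₁ * H * P₂ = D₁ * (P₁ * (H * P₂)) from by rw [mul_assoc, mul_assoc],
    h2, h1, h3, h4]

lemma diag_unit {N : ℕ} {D : Matrix (Fin N) (Fin N) ℂ} (hD : IsDiagUnitary D) (i : Fin N) :
    D i i * (starRingEnd ℂ) (D i i) = 1 := by
  obtain ⟨hd, hu⟩ := hD
  have := congrArg (fun M => M i i) hu
  simp only [mul_apply, conjTranspose_apply, one_apply_eq] at this
  rw [Finset.sum_eq_single i] at this
  · exact this
  · intro b _ hb; rw [hd (Ne.symm hb)]; simp
  · intro hi; exact absurd (Finset.mem_univ _) hi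

/-- The Haagerup set is invariant under equivalence of matrices:
if `H₁ = D₁ P₁ H₂ P₂ D₂` for diagonal unitary `D₁, D₂` and permutation matrices `P₁, P₂`,
then `Λ(H₁) = Λ(H₂)`. -/
theorem haagerupSet_invariant {N : ℕ} (H₁ H₂ D₁ D₂ P₁ P₂ : Matrix (Fin N) (Fin N) ℂ)
    (hD₁ : IsDiagUnitary D₁) (hD₂ : IsDiagUnitary D₂)
    (hP₁ : IsPermMatrix P₁) (hP₂ : IsPermMatrix P₂)
    (h : H₁ = D₁ * P₁ * H₂ * P₂ * D₂) :
    HaagerupSet H₁ = HaagerupSet H₂ := by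
  obtain ⟨σ₁, hp1⟩ := hP₁
  obtain ⟨σ₂, hp2⟩ := hP₂
  have he : ∀ j k, H₁ j k = D₁ j j * H₂ (σ₁ j) (σ₂.symm k) * D₂ k k := by
    intro j k; rw [h]; exact entry_aux H₂ D₁ D₂ P₁ P₂ hD₁.1 hD₂.1 σ₁ σ₂ hp1 hp2 j k
  have key : ∀ j k l m, H₁ j k * H₁ l m * (starRingEnd ℂ) (H₁ j m) * (starRingEnd ℂ) (H₁ l k)
      = H₂ (σ₁ j) (σ₂.symm k) * H₂ (σ₁ l) (σ₂.symm m)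
        * (starRingEnd ℂ) (H₂ (σ₁ j) (σ₂.symm m)) * (starRingEnd ℂ) (H₂ (σ₁ l) (σ₂.symm k)) := by
    intro j k l m
    have u1 := diag_unit hD₁ j
    have u2 := diag_unit hD₁ l
    have u3 := diag_unit hD₂ k
    have u4 := diag_unit hD₂ m
    simp only [he, _root_.map_mul]
    calc _ = (D₁ j j * (starRingEnd ℂ) (D₁ j j)) * (D₁ l l * (starRingEnd ℂ) (D₁ l l))
          * (D₂ k k * (starRingEnd ℂ) (D₂ k k)) * (D₂ m m * (starRingEnd ℂ) (D₂ m m))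
          * (H₂ (σ₁ j) (σ₂.symm k) * H₂ (σ₁ l) (σ₂.symm m)
            * (starRingEnd ℂ) (H₂ (σ₁ j) (σ₂.symm m)) * (starRingEnd ℂ) (H₂ (σ₁ l) (σ₂.symm k))) := by ring
      _ = _ := by rw [u1, u2, u3, u4]; ring
  ext z
  constructor
  · rintro ⟨j, k, l, m, rfl⟩
    exact ⟨σ₁ j, σ₂.symm k, σ₁ l, σ₂.symm m, key j k l m⟩
  · rintro ⟨j, k, l, m, rfl⟩
    refine ⟨σ₁.symm j, σ₂ k, σ₁.symm l, σ₂ m, ?_⟩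
    rw [key]
    simp
end

section
/- Let a, b, c, d be complex numbers of modulus 1 and write x̄ = conj(x) = 1/x. Then the 9×9 matrix Y9C(a,b,c,d) is a complex Hadamard matrix if and only if the following five equations hold (where c.c. denotes the complex conjugate of all preceding terms): a+b+c+d+c.c. = −1; a²+b²+c²+d²+c.c. = −1; a/b+b/d+c/d+ac+c.c. = −1; a/d+b/c+bc+ad+c.c. = −1; a/c+ab+cd+bd+c.c. = −1. -/
open Matrix Complex

/-- `H` is a complex Hadamard matrix of order `N`: every entry has modulus one and
`H·Hᴴ = N·I`. -/
def IsCHM {N : ℕ} (H : Matrix (Fin N) (Fin N) ℂ) : Prop :=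
  (∀ j k, ‖H j k‖ = 1) ∧
  H * Hᴴ = (N : ℂ) • (1 : Matrix (Fin N) (Fin N) ℂ)

/-- The matrix `Y9C(a,b,c,d)` from the paper, with `x̄ = conj x`. -/
noncomputable def Y9C (a b c d : ℂ) : Matrix (Fin 9) (Fin 9) ℂ :=
  let s := starRingEnd ℂ
  !![1,   1,   1,   1,   1,   1,   1,   1,   1;
     1,   a,   d, s a, s c, s b,   c,   b, s d;
     1,   b,   c, s b,   a, s d, s a,   d, s c;
     1,   c, s b, s c,   d,   a, s d, s a,   b;
     1, s b, s c,   b, s a,   d,   a, s d,   c;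
     1,   d, s a, s d,   b, s c, s b,   c,   a;
     1, s a, s d,   a,   c,   b, s c, s b,   d;
     1, s c,   b,   c, s d, s a,   d,   a, s b;
     1, s d,   a,   d, s b,   c,   b, s c, s a]

namespace Matrix
@[simp] lemma cons_val_five' {α : Type*} {m : ℕ} (x : α) (u : Fin (m+5) → α) :
    vecCons x u 5 = vecHead (vecTail (vecTail (vecTail (vecTail u)))) := rfl
@[simp] lemma cons_val_six' {α : Type*} {m : ℕ} (x : α) (u : Fin (m+6) → α) :
    vecCons x u 6 = vecHead (vecTail (vecTail (vecTail (vecTail (vecTail u))))) := rfl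
@[simp] lemma cons_val_seven' {α : Type*} {m : ℕ} (x : α) (u : Fin (m+7) → α) :
    vecCons x u 7 = vecHead (vecTail (vecTail (vecTail (vecTail (vecTail (vecTail u)))))) := rfl
@[simp] lemma cons_val_eight' {α : Type*} {m : ℕ} (x : α) (u : Fin (m+8) → α) :
    vecCons x u 8 = vecHead (vecTail (vecTail (vecTail (vecTail (vecTail (vecTail (vecTail u))))))) := rfl
end Matrix

set_option maxHeartbeats 4000000 in
/-- For unimodular `a, b, c, d`, the matrix `Y9C(a,b,c,d)` is a complex Hadamard matrix
if and only if the five unitarity equations hold. -/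
theorem Y9C_isCHM_iff (a b c d : ℂ)
    (ha : ‖a‖ = 1) (hb : ‖b‖ = 1)
    (hc : ‖c‖ = 1) (hd : ‖d‖ = 1) :
    IsCHM (Y9C a b c d) ↔
      (a + b + c + d + (starRingEnd ℂ) (a + b + c + d) = -1 ∧
       a^2 + b^2 + c^2 + d^2 + (starRingEnd ℂ) (a^2 + b^2 + c^2 + d^2) = -1 ∧
       a/b + b/d + c/d + a*c + (starRingEnd ℂ) (a/b + b/d + c/d + a*c) = -1 ∧
       a/d + b/c + b*c + a*d + (starRingEnd ℂ) (a/d + b/c + b*c + a*d) = -1 ∧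
       a/c + a*b + c*d + b*d + (starRingEnd ℂ) (a/c + a*b + c*d + b*d) = -1) := by
  have ha0 : a ≠ 0 := by intro h; rw [h] at ha; simp at ha
  have hb0 : b ≠ 0 := by intro h; rw [h] at hb; simp at hb
  have hc0 : c ≠ 0 := by intro h; rw [h] at hc; simp at hc
  have hd0 : d ≠ 0 := by intro h; rw [h] at hd; simp at hd
  have ra : a * (starRingEnd ℂ) a = 1 := by
    rw [Complex.mul_conj, Complex.normSq_eq_norm_sq, ha]; norm_num
  have rb : b * (starRingEnd ℂ) b = 1 := by
    rw [Complex.mul_conj, Complex.normSq_eq_norm_sq, hb]; norm_num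
  have rc : c * (starRingEnd ℂ) c = 1 := by
    rw [Complex.mul_conj, Complex.normSq_eq_norm_sq, hc]; norm_num
  have rd : d * (starRingEnd ℂ) d = 1 := by
    rw [Complex.mul_conj, Complex.normSq_eq_norm_sq, hd]; norm_num
  have ha' : (starRingEnd ℂ) a = a⁻¹ := eq_inv_of_mul_eq_one_left (by linear_combination ra)
  have hb' : (starRingEnd ℂ) b = b⁻¹ := eq_inv_of_mul_eq_one_left (by linear_combination rb)
  have hc' : (starRingEnd ℂ) c = c⁻¹ := eq_inv_of_mul_eq_one_left (by linear_combination rc)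
  have hd' : (starRingEnd ℂ) d = d⁻¹ := eq_inv_of_mul_eq_one_left (by linear_combination rd)
  constructor
  · rintro ⟨-, hU⟩
    have h1 : (Y9C a b c d * (Y9C a b c d)ᴴ) 0 1 = ((9 : ℂ) • (1 : Matrix (Fin 9) (Fin 9) ℂ)) 0 1 := by rw [hU]; norm_num
    have h2 : (Y9C a b c d * (Y9C a b c d)ᴴ) 1 6 = ((9 : ℂ) • (1 : Matrix (Fin 9) (Fin 9) ℂ)) 1 6 := by rw [hU]; norm_num
    have h3 : (Y9C a b c d * (Y9C a b c d)ᴴ) 1 2 = ((9 : ℂ) • (1 : Matrix (Fin 9) (Fin 9) ℂ)) 1 2 := by rw [hU]; norm_num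
    have h4 : (Y9C a b c d * (Y9C a b c d)ᴴ) 1 5 = ((9 : ℂ) • (1 : Matrix (Fin 9) (Fin 9) ℂ)) 1 5 := by rw [hU]; norm_num
    have h5 : (Y9C a b c d * (Y9C a b c d)ᴴ) 1 3 = ((9 : ℂ) • (1 : Matrix (Fin 9) (Fin 9) ℂ)) 1 3 := by rw [hU]; norm_num
    simp [Y9C, Matrix.mul_apply, Fin.sum_univ_succ, Matrix.conjTranspose_apply,
      Matrix.smul_apply, Matrix.one_apply, Complex.star_def, Matrix.vecHead,
      Matrix.vecTail] at h1 h2 h3 h4 h5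
    refine ⟨?_, ?_, ?_, ?_, ?_⟩
    · simp only [map_add]
      linear_combination h1
    · simp only [map_add, map_pow]
      linear_combination h2
    · simp only [map_add, _root_.map_mul, map_pow, map_div₀, map_inv₀, div_eq_mul_inv,
        Complex.conj_conj, ha', hb', hc', hd', inv_inv]
      simp only [← ha', ← hb', ← hc', ← hd']
      linear_combination h3
    · simp only [map_add, _root_.map_mul, map_pow, map_div₀, map_inv₀, div_eq_mul_inv,
        Complex.conj_conj, ha', hb', hc', hd', inv_inv]
      simp only [← ha', ← hb', ← hc', ← hd']
      linear_combination h4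
    · simp only [map_add, _root_.map_mul, map_pow, map_div₀, map_inv₀, div_eq_mul_inv,
        Complex.conj_conj, ha', hb', hc', hd', inv_inv]
      simp only [← ha', ← hb', ← hc', ← hd']
      linear_combination h5
  · rintro ⟨e1, e2, e3, e4, e5⟩
    simp only [map_add] at e1
    simp only [map_add, map_pow] at e2
    simp only [map_add, _root_.map_mul, map_pow, map_div₀, map_inv₀, div_eq_mul_inv,
        Complex.conj_conj, ha', hb', hc', hd', inv_inv] at e3 e4 e5
    simp only [← ha', ← hb', ← hc', ← hd'] at e3 e4 e5
    refine ⟨?_, ?_⟩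
    · intro j k
      fin_cases j <;> fin_cases k <;>
        simp [Y9C, ha, hb, hc, hd, Complex.norm_conj, Matrix.vecHead, Matrix.vecTail]
    · ext j k
      fin_cases j <;> fin_cases k <;>
        simp [Y9C, Matrix.mul_apply, Fin.sum_univ_succ, Matrix.conjTranspose_apply,
          Matrix.smul_apply, Matrix.one_apply, Complex.star_def, Matrix.vecHead,
          Matrix.vecTail]
      · norm_num
      · linear_combination e1
      · linear_combination e1
      · linear_combination e1
      · linear_combination e1
      · linear_combination e1
      · linear_combination e1
      · linear_combination e1
      · linear_combination e1
      · linear_combination e1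
      · linear_combination 2*ra + 2*rb + 2*rc + 2*rd
      · linear_combination e3
      · linear_combination e5
      · linear_combination e5
      · linear_combination e4
      · linear_combination e2
      · linear_combination e3
      · linear_combination e4
      · linear_combination e1
      · linear_combination e3
      · linear_combination 2*ra + 2*rb + 2*rc + 2*rd
      · linear_combination e4
      · linear_combination e2
      · linear_combination e3
      · linear_combination e5
      · linear_combination e4
      · linear_combination e5
      · linear_combination e1
      · linear_combination e5
      · linear_combination e4
      · linear_combination 2*ra + 2*rb + 2*rc + 2*rd
      · linear_combination e4
      · linear_combination e3
      · linear_combination e3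
      · linear_combination e2
      · linear_combination e5
      · linear_combination e1
      · linear_combination e5
      · linear_combination e2
      · linear_combination e4
      · linear_combination 2*ra + 2*rb + 2*rc + 2*rd
      · linear_combination e5
      · linear_combination e3
      · linear_combination e4
      · linear_combination e3
      · linear_combination e1
      · linear_combination e4
      · linear_combination e3
      · linear_combination e3
      · linear_combination e5
      · linear_combination 2*ra + 2*rb + 2*rc + 2*rd
      · linear_combination e4
      · linear_combination e5
      · linear_combination e2
      · linear_combination e1
      · linear_combination e2
      · linear_combination e5
      · linear_combination e3
      · linear_combination e3
      · linear_combination e4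
      · linear_combination 2*ra + 2*rb + 2*rc + 2*rd
      · linear_combination e5
      · linear_combination e4
      · linear_combination e1
      · linear_combination e3
      · linear_combination e4
      · linear_combination e2
      · linear_combination e4
      · linear_combination e5
      · linear_combination e5
      · linear_combination 2*ra + 2*rb + 2*rc + 2*rd
      · linear_combination e3
      · linear_combination e1
      · linear_combination e4
      · linear_combination e5
      · linear_combination e5
      · linear_combination e3
      · linear_combination e2
      · linear_combination e4
      · linear_combination e3
      · linear_combination 2*ra + 2*rb + 2*rc + 2*rd
end

section
/- Let a, b, c be complex numbers of modulus 1 and let V8(a,b,c) be the 8×8 matrix with rows: (−1,−1,b,b,c,c,a,a); (−1,b,−1,c,b,a,c,−a); (b,−1,c,−1,a,b,−a,c); (b,c,−1,a,−1,−a,b,−c); (c,b,a,−1,−a,−1,−c,b); (c,a,b,−a,−1,−c,−1,−b); (a,c,−a,b,−c,−1,−b,−1); (a,−a,c,−c,b,−b,−1,1). Then V8(a,b,c) is a complex Hadamard matrix (i.e. V8·V8ᴴ = 8·I) if and only if the following three equations hold: −1/b − b + b/c + c/b + c/a + a/c = 0; −1/b − b − 1/c − c − c/a − a/c + b/a + a/b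 = 0; 1/c + c + 1/a + a + b/a + a/b = 0. -/
open Matrix Complex

/-- Elser's matrix `V8(a,b,c)` in its undephased form. -/
def V8 (a b c : ℂ) : Matrix (Fin 8) (Fin 8) ℂ :=
  !![-1, -1,  b,  b,  c,  c,  a,  a;
     -1,  b, -1,  c,  b,  a,  c, -a;
      b, -1,  c, -1,  a,  b, -a,  c;
      b,  c, -1,  a, -1, -a,  b, -c;
      c,  b,  a, -1, -a, -1, -c,  b;
      c,  a,  b, -a, -1, -c, -1, -b;
      a,  c, -a,  b, -c, -1, -b, -1;
      a, -a,  c, -c,  b, -b, -1,  1]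

section aux
variable {α : Type*} {m : ℕ}
theorem my_cons_val_five (x : α) (u : Fin m.succ.succ.succ.succ.succ → α) :
    Matrix.vecCons x u 5 = Matrix.vecHead (Matrix.vecTail (Matrix.vecTail (Matrix.vecTail (Matrix.vecTail u)))) :=
  rfl
theorem my_cons_val_six (x : α) (u : Fin m.succ.succ.succ.succ.succ.succ → α) :
    Matrix.vecCons x u 6 = Matrix.vecHead (Matrix.vecTail (Matrix.vecTail (Matrix.vecTail (Matrix.vecTail (Matrix.vecTail u))))) :=
  rfl
theorem my_cons_val_seven (x : α) (u : Fin m.succ.succ.succ.succ.succ.succ.succ → α) :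
    Matrix.vecCons x u 7 = Matrix.vecHead (Matrix.vecTail (Matrix.vecTail (Matrix.vecTail (Matrix.vecTail (Matrix.vecTail (Matrix.vecTail u)))))) :=
  rfl
end aux

set_option maxHeartbeats 1000000 in
/-- For unimodular `a, b, c`, the matrix `V8(a,b,c)` is a complex Hadamard matrix of order 8
if and only if the three unitarity equations hold. -/
theorem V8_isCHM_iff (a b c : ℂ)
    (ha : ‖a‖ = 1) (hb : ‖b‖ = 1) (hc : ‖c‖ = 1) :
    IsCHM (V8 a b c) ↔
      (-1/b - b + b/c + c/b + c/a + a/c = 0 ∧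
       -1/b - b - 1/c - c - c/a - a/c + b/a + a/b = 0 ∧
       1/c + c + 1/a + a + b/a + a/b = 0) := by
  have ha0 : a ≠ 0 := by intro h; simp [h] at ha
  have hb0 : b ≠ 0 := by intro h; simp [h] at hb
  have hc0 : c ≠ 0 := by intro h; simp [h] at hc
  have hA : a * a⁻¹ = 1 := mul_inv_cancel₀ ha0
  have hB : b * b⁻¹ = 1 := mul_inv_cancel₀ hb0
  have hC : c * c⁻¹ = 1 := mul_inv_cancel₀ hc0
  have hnsa : Complex.normSq a = 1 := by rw [Complex.normSq_eq_norm_sq, ha]; norm_num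
  have hnsb : Complex.normSq b = 1 := by rw [Complex.normSq_eq_norm_sq, hb]; norm_num
  have hnsc : Complex.normSq c = 1 := by rw [Complex.normSq_eq_norm_sq, hc]; norm_num
  have hca : (starRingEnd ℂ) a = a⁻¹ := by rw [Complex.inv_def, hnsa]; simp
  have hcb : (starRingEnd ℂ) b = b⁻¹ := by rw [Complex.inv_def, hnsb]; simp
  have hcc : (starRingEnd ℂ) c = c⁻¹ := by rw [Complex.inv_def, hnsc]; simp
  constructor
  · rintro ⟨-, hM⟩
    have e01 : (V8 a b c * (V8 a b c)ᴴ) 0 1 = (((8:ℕ):ℂ) • (1 : Matrix (Fin 8) (Fin 8) ℂ)) 0 1 := by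
      rw [hM]
    have e03 : (V8 a b c * (V8 a b c)ᴴ) 0 3 = (((8:ℕ):ℂ) • (1 : Matrix (Fin 8) (Fin 8) ℂ)) 0 3 := by
      rw [hM]
    have e23 : (V8 a b c * (V8 a b c)ᴴ) 2 3 = (((8:ℕ):ℂ) • (1 : Matrix (Fin 8) (Fin 8) ℂ)) 2 3 := by
      rw [hM]
    simp [Matrix.mul_apply, Fin.sum_univ_succ, V8, Matrix.conjTranspose_apply, hca, hcb, hcc,
      Matrix.one_apply, Matrix.cons_val_zero, Matrix.cons_val_succ, Matrix.cons_val', Matrix.head_cons,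
      Matrix.smul_apply, smul_eq_mul, Finset.sum_empty, Fin.sum_univ_zero, map_neg, _root_.map_one,
      Matrix.cons_val_one, Matrix.empty_val', Matrix.cons_val_fin_one, Matrix.head_fin_const,
      mul_one, mul_neg, neg_neg, neg_mul, one_mul] at e01 e03 e23
    norm_num at e01 e03 e23
    refine ⟨?_, ?_, ?_⟩
    · linear_combination e01 + hA
    · linear_combination e03
    · linear_combination -e23 + hB - hC
  · rintro ⟨h1, h2, h3⟩
    constructor
    · intro j k
      fin_cases j <;> fin_cases k <;>
        simp [V8, ha, hb, hc, my_cons_val_five, my_cons_val_six, my_cons_val_seven] <;>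
        simp [Matrix.vecHead, Matrix.vecTail, ha, hb, hc]
    ext i j
    fin_cases i <;> fin_cases j <;>
        simp [Matrix.mul_apply, Fin.sum_univ_succ, V8, Matrix.conjTranspose_apply, hca, hcb, hcc,
          Matrix.one_apply, Matrix.cons_val_zero, Matrix.cons_val_succ, Matrix.cons_val', Matrix.head_cons,
          Matrix.cons_val_two, Matrix.cons_val_three, Matrix.cons_val_four,
          my_cons_val_five, my_cons_val_six, my_cons_val_seven, Matrix.tail_cons,
          Matrix.smul_apply, smul_eq_mul, Finset.sum_empty, Fin.sum_univ_zero, map_neg, _root_.map_one,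
          Matrix.cons_val_one, Matrix.empty_val', Matrix.cons_val_fin_one, Matrix.head_fin_const,
          mul_one, mul_neg, neg_neg, neg_mul, one_mul]
        <;> (try norm_num) <;>
        (first

          | (linear_combination (0:ℂ)*a)
          | (linear_combination -h1 + hA)
          | (linear_combination -h2)
          | (linear_combination -h3 + hB - hC)
          | (linear_combination 2*hA + 2*hB + 2*hC)
          | (linear_combination h1 - hA)
          | (linear_combination h2)
          | (linear_combination h3 - hB + hC))
end

section
/- The octic polynomial q(x) = x⁸ + 16x⁷ + 56x⁶ − 96x⁵ − 696x⁴ − 896x³ − 96x² + 256x − 16 factors as the product q(x) = (x⁴ + 8x³ + α₀x² + β₀x + γ₀)·(x⁴ + 8x³ + α₁x² + β₁x + γ₁), where for μ ∈ {0,1}: α_μ = −4 + 2(−1)^μ·√(116 − 2√2), β_μ = −16 + 8(−1)^μ·√(10 − √2), and γ_μ = −4√2 + 4 − 4(−1)^μ·√(4 − 2√2), the square roots being the nonnegative real square roots. -/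
/-- The octic polynomial `q` factors into the product of two quartic polynomials with the
stated real coefficients (√ denoting the nonnegative real square root). -/
theorem octic_factorization (x : ℝ) :
    x^8 + 16*x^7 + 56*x^6 - 96*x^5 - 696*x^4 - 896*x^3 - 96*x^2 + 256*x - 16 =
      (x^4 + 8*x^3 + (-4 + 2*Real.sqrt (116 - 2*Real.sqrt 2))*x^2
        + (-16 + 8*Real.sqrt (10 - Real.sqrt 2))*x
        + (-4*Real.sqrt 2 + 4 - 4*Real.sqrt (4 - 2*Real.sqrt 2))) *
      (x^4 + 8*x^3 + (-4 - 2*Real.sqrt (116 - 2*Real.sqrt 2))*x^2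
        + (-16 - 8*Real.sqrt (10 - Real.sqrt 2))*x
        + (-4*Real.sqrt 2 + 4 + 4*Real.sqrt (4 - 2*Real.sqrt 2))) := by
  set s := Real.sqrt 2 with hsdef
  have hs0 : (0:ℝ) ≤ s := Real.sqrt_nonneg 2
  have hs : s^2 = 2 := Real.sq_sqrt (by norm_num)
  have hs2 : s ≤ 2 := by nlinarith
  have h1 : (0:ℝ) ≤ 116 - 2*s := by nlinarith
  have h2 : (0:ℝ) ≤ 10 - s := by nlinarith
  have h3 : (0:ℝ) ≤ 4 - 2*s := by nlinarith
  have ha : (Real.sqrt (116 - 2*s))^2 = 116 - 2*s := Real.sq_sqrt h1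
  have hb : (Real.sqrt (10 - s))^2 = 10 - s := Real.sq_sqrt h2
  have hc : (Real.sqrt (4 - 2*s))^2 = 4 - 2*s := Real.sq_sqrt h3
  have hab : Real.sqrt (116 - 2*s) * Real.sqrt (10 - s) = 34 - 2*s := by
    rw [← Real.sqrt_mul h1]
    have : (116 - 2*s) * (10 - s) = (34 - 2*s)^2 := by linear_combination -2*hs
    rw [this, Real.sqrt_sq (by nlinarith)]
  have hac : Real.sqrt (116 - 2*s) * Real.sqrt (4 - 2*s) = 20 - 6*s := by
    rw [← Real.sqrt_mul h1]
    have : (116 - 2*s) * (4 - 2*s) = (20 - 6*s)^2 := by linear_combination -32*hs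
    rw [this, Real.sqrt_sq (by nlinarith)]
  have hbc : Real.sqrt (10 - s) * Real.sqrt (4 - 2*s) = 6 - 2*s := by
    rw [← Real.sqrt_mul h2]
    have : (10 - s) * (4 - 2*s) = (6 - 2*s)^2 := by linear_combination -2*hs
    rw [this, Real.sqrt_sq (by nlinarith)]
  linear_combination (4*x^4)*ha + (32*x^3)*hab + (64*x^2)*hb - (16*x^2)*hac
    - (64*x)*hbc + 16*hc - 16*hs
end

section
/- Let k ≥ 0, N = 4k + 3, and let α₀, …, α_{2k} be real numbers with c_j = exp(i·α_j). Let L_N be the N×N matrix whose first row and first column consist entirely of ones and whose (N−1)×(N−1) core is the block-circulant matrix circ(B₀, B₁, …, B_{2k}) built from the 2×2 blocks B_j = [[c_j, conj(c_j)],[conj(c_j), c_j]] (so the (r,s) block of the core is B_{(s−r) mod (2k+1)}). Then L_N is a complex Hadamard matrix (i.e. L_N·L_Nᴴ = N·I) if and only if all of the following hold: ∑_{j=0}^{2k} cos α_j = −1/2; ∑_{j=0}^{2k} cos(2α_j) = −1/2; and for every i with 0 ≤ i < k, both ∑_{j=0}^{2k} cos(α_j + α_{(j+1+i) mod (2k+1)})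 = −1/2 and ∑_{j=0}^{2k} cos(α_j − α_{(j+1+i) mod (2k+1)}) = −1/2. -/
open Matrix Complex
open Finset

/-- The matrix `L_N` of order `N = 4k+3`: first row and column of ones, and
`(N−1)×(N−1)` core equal to the block-circulant matrix built from the 2×2 blocks
`B_j = [[c_j, conj c_j], [conj c_j, c_j]]` with `c_j = exp(i·α_j)`; the `(r,s)` block of
the core is `B_{(s−r) mod (2k+1)}`. -/
noncomputable def Lmat (k : ℕ) (α : ℕ → ℝ) : Matrix (Fin (4*k+3)) (Fin (4*k+3)) ℂ :=
  Matrix.of fun j l =>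
    if (j : ℕ) = 0 ∨ (l : ℕ) = 0 then 1
    else
      let m := 2*k+1
      let r := ((j : ℕ) - 1) / 2
      let s := ((l : ℕ) - 1) / 2
      let z := Complex.exp ((α ((s + m - r) % m) : ℂ) * Complex.I)
      if ((j : ℕ) - 1) % 2 = ((l : ℕ) - 1) % 2 then z else (starRingEnd ℂ) z

lemma conj_expI (x : ℝ) : (starRingEnd ℂ) (Complex.exp ((x:ℂ) * I)) = Complex.exp ((-x:ℝ) * I) := by
  rw [← Complex.exp_conj]; push_cast; rw [_root_.map_mul, Complex.conj_I, Complex.conj_ofReal]; ring_nf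

lemma expI_add_neg (x : ℝ) : Complex.exp ((x:ℂ)*I) + Complex.exp ((-x:ℝ)*I) = 2 * Real.cos x := by
  rw [Complex.exp_mul_I, Complex.exp_mul_I]
  push_cast
  rw [Complex.cos_neg, Complex.sin_neg, ← Complex.ofReal_cos]
  push_cast; ring

lemma pair_minus (x y : ℝ) :
    Complex.exp ((x:ℂ)*I) * (starRingEnd ℂ) (Complex.exp ((y:ℂ)*I))
      + (starRingEnd ℂ) (Complex.exp ((x:ℂ)*I)) * Complex.exp ((y:ℂ)*I)
      = 2 * Real.cos (x - y) := by
  rw [conj_expI, conj_expI, ← Complex.exp_add, ← Complex.exp_add]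
  have h1 : (x:ℂ)*I + (-y:ℝ)*I = ((x-y:ℝ):ℂ)*I := by push_cast; ring
  have h2 : ((-x:ℝ):ℂ)*I + (y:ℝ)*I = ((-(x-y):ℝ):ℂ)*I := by push_cast; ring
  rw [h1, h2, expI_add_neg]

lemma pair_plus (x y : ℝ) :
    Complex.exp ((x:ℂ)*I) * Complex.exp ((y:ℂ)*I)
      + (starRingEnd ℂ) (Complex.exp ((x:ℂ)*I)) * (starRingEnd ℂ) (Complex.exp ((y:ℂ)*I))
      = 2 * Real.cos (x + y) := by
  rw [conj_expI, conj_expI, ← Complex.exp_add, ← Complex.exp_add]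
  have h1 : (x:ℂ)*I + (y:ℝ)*I = ((x+y:ℝ):ℂ)*I := by push_cast; ring
  have h2 : ((-x:ℝ):ℂ)*I + ((-y:ℝ):ℂ)*I = ((-(x+y):ℝ):ℂ)*I := by push_cast; ring
  rw [h1, h2, expI_add_neg]

lemma sum_pairs {M : Type*} [AddCommMonoid M] (m : ℕ) (g : ℕ → M) :
    ∑ l ∈ range (2*m), g l = ∑ s ∈ range m, (g (2*s) + g (2*s+1)) := by
  induction m with
  | zero => simp
  | succ n ih =>
      have h : 2*(n+1) = (2*n+1)+1 := by ring
      rw [h, Finset.sum_range_succ, Finset.sum_range_succ, ih, Finset.sum_range_succ]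
      have : 2*n+1 = 2*n+1 := rfl
      abel

lemma sum_rot {M : Type*} [AddCommMonoid M] (m : ℕ) (F : ℕ → M) :
    ∑ j ∈ range m, F ((j+1) % m) = ∑ j ∈ range m, F j := by
  match m with
  | 0 => simp
  | n+1 =>
      rw [Finset.sum_range_succ, Finset.sum_range_succ' (fun j => F j) n]
      rw [Nat.mod_self]
      congr 1
      apply Finset.sum_congr rfl
      intro j hj
      rw [Nat.mod_eq_of_lt (by simp at hj; omega)]

lemma sum_shift {M : Type*} [AddCommMonoid M] (m c : ℕ) (F : ℕ → M) :
    ∑ j ∈ range m, F ((j+c) % m) = ∑ j ∈ range m, F j := by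
  induction c with
  | zero =>
      apply Finset.sum_congr rfl
      intro j hj
      simp at hj
      rw [Nat.add_zero, Nat.mod_eq_of_lt (by omega)]
  | succ n ih =>
      have h : ∀ j, (j + (n+1)) % m = ((j+1) % m + n) % m := by
        intro j; rw [Nat.mod_add_mod]; congr 1; omega
      calc ∑ j ∈ range m, F ((j+(n+1)) % m)
          = ∑ j ∈ range m, (fun x => F ((x + n) % m)) ((j+1) % m) := by
            apply Finset.sum_congr rfl; intro j _; simp only [h j]
        _ = ∑ j ∈ range m, (fun x => F ((x + n) % m)) j := sum_rot m (fun x => F ((x + n) % m))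
        _ = ∑ j ∈ range m, F j := ih

noncomputable def ent (k : ℕ) (α : ℕ → ℝ) (j l : ℕ) : ℂ :=
  if j = 0 ∨ l = 0 then 1
  else
    let z := Complex.exp ((α (((l-1)/2 + (2*k+1) - (j-1)/2) % (2*k+1)) : ℂ) * Complex.I)
    if (j - 1) % 2 = (l - 1) % 2 then z else (starRingEnd ℂ) z

lemma Lmat_apply (k : ℕ) (α : ℕ → ℝ) (a l : Fin (4*k+3)) :
    Lmat k α a l = ent k α (a:ℕ) (l:ℕ) := rfl

lemma ent_zero_left (k : ℕ) (α : ℕ → ℝ) (l : ℕ) : ent k α 0 l = 1 := by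
  simp [ent]

lemma ent_zero_right (k : ℕ) (α : ℕ → ℝ) (j : ℕ) : ent k α j 0 = 1 := by
  simp [ent]

lemma ent_odd (k : ℕ) (α : ℕ → ℝ) (j s : ℕ) (hj : j ≠ 0) :
    ent k α j (2*s+1) =
      if (j-1) % 2 = 0 then Complex.exp ((α ((s + (2*k+1) - (j-1)/2) % (2*k+1)) : ℂ) * Complex.I)
      else (starRingEnd ℂ) (Complex.exp ((α ((s + (2*k+1) - (j-1)/2) % (2*k+1)) : ℂ) * Complex.I)) := by
  have h1 : (2*s+1-1)/2 = s := by omega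
  have h2 : (2*s+1-1) % 2 = 0 := by omega
  rw [ent, if_neg (by omega : ¬(j = 0 ∨ 2*s+1 = 0))]
  simp only [h1, h2]

lemma ent_even (k : ℕ) (α : ℕ → ℝ) (j s : ℕ) (hj : j ≠ 0) :
    ent k α j (2*s+2) =
      if (j-1) % 2 = 1 then Complex.exp ((α ((s + (2*k+1) - (j-1)/2) % (2*k+1)) : ℂ) * Complex.I)
      else (starRingEnd ℂ) (Complex.exp ((α ((s + (2*k+1) - (j-1)/2) % (2*k+1)) : ℂ) * Complex.I)) := by
  have h1 : (2*s+2-1)/2 = s := by omega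
  have h2 : (2*s+2-1) % 2 = 1 := by omega
  rw [ent, if_neg (by omega : ¬(j = 0 ∨ 2*s+2 = 0))]
  simp only [h1, h2]

lemma abs_ent (k : ℕ) (α : ℕ → ℝ) (j l : ℕ) : ‖ent k α j l‖ = 1 := by
  rw [ent]
  split_ifs <;>
  simp [Complex.norm_exp_ofReal_mul_I]

lemma ent_mul_conj_self (k : ℕ) (α : ℕ → ℝ) (j l : ℕ) :
    ent k α j l * (starRingEnd ℂ) (ent k α j l) = 1 := by
  rw [Complex.mul_conj, ← Complex.sq_norm, abs_ent]
  norm_num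

lemma sum_ent (k : ℕ) (α : ℕ → ℝ) (b : ℕ) (hb : b ≠ 0) (hb2 : b < 4*k+3) :
    ∑ l ∈ range (4*k+3), ent k α b l
      = 1 + 2 * ((∑ j ∈ range (2*k+1), Real.cos (α j) : ℝ) : ℂ) := by
  set m := 2*k+1 with hm
  set r := (b-1)/2 with hrdef
  have hr : r < m := by omega
  have h43 : 4*k+3 = 2*m+1 := by omega
  rw [show Finset.range (4*k+3) = Finset.range (2*m+1) from by rw [h43], Finset.sum_range_succ' (fun l => ent k α b l) (2*m), ent_zero_right,
    sum_pairs m (fun l => ent k α b (l+1))]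
  have key : ∀ s, ent k α b (2*s+1) + ent k α b (2*s+1+1)
      = 2 * ((Real.cos (α ((s + (m-r)) % m)) : ℝ) : ℂ) := by
    intro s
    have hh : 2*s+1+1 = 2*s+2 := rfl
    have hsr : s + m - r = s + (m - r) := by omega
    rw [hh, ent_odd k α b s hb, ent_even k α b s hb, hsr]
    rcases Nat.mod_two_eq_zero_or_one (b-1) with hp | hp <;>
      simp only [hp] <;> norm_num <;>
      rw [conj_expI] <;> [skip; rw [add_comm]] <;> rw [expI_add_neg, Complex.ofReal_cos]
  rw [Finset.sum_congr rfl (fun s _ => key s),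
    sum_shift m (m-r) (fun j => 2 * ((Real.cos (α j) : ℝ) : ℂ))]
  push_cast
  rw [Finset.mul_sum]
  ring

lemma mul_apply_diag (k : ℕ) (α : ℕ → ℝ) (a : Fin (4*k+3)) :
    (Lmat k α * (Lmat k α)ᴴ) a a = ((4*k+3 : ℕ) : ℂ) := by
  rw [Matrix.mul_apply]
  simp only [Matrix.conjTranspose_apply, Lmat_apply, Complex.star_def, ent_mul_conj_self]
  simp

lemma mul_apply_col0 (k : ℕ) (α : ℕ → ℝ) (a b : Fin (4*k+3)) (ha : (a:ℕ) ≠ 0)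
    (hb : (b:ℕ) = 0) :
    (Lmat k α * (Lmat k α)ᴴ) a b
      = 1 + 2 * ((∑ j ∈ range (2*k+1), Real.cos (α j) : ℝ) : ℂ) := by
  rw [Matrix.mul_apply]
  simp only [Matrix.conjTranspose_apply, Lmat_apply, Complex.star_def, hb, ent_zero_left,
    _root_.map_one, mul_one]
  rw [Fin.sum_univ_eq_sum_range (fun l => ent k α (a:ℕ) l) (4*k+3)]
  exact sum_ent k α (a:ℕ) ha a.isLt

lemma mul_apply_row0 (k : ℕ) (α : ℕ → ℝ) (a b : Fin (4*k+3)) (ha : (a:ℕ) = 0)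
    (hb : (b:ℕ) ≠ 0) :
    (Lmat k α * (Lmat k α)ᴴ) a b
      = 1 + 2 * ((∑ j ∈ range (2*k+1), Real.cos (α j) : ℝ) : ℂ) := by
  rw [Matrix.mul_apply]
  simp only [Matrix.conjTranspose_apply, Lmat_apply, Complex.star_def, ha, ent_zero_left,
    one_mul]
  rw [Fin.sum_univ_eq_sum_range (fun l => (starRingEnd ℂ) (ent k α (b:ℕ) l)) (4*k+3),
    ← map_sum, sum_ent k α (b:ℕ) hb b.isLt]
  rw [_root_.map_add, _root_.map_one, _root_.map_mul, Complex.conj_ofReal]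
  norm_num
  exact Or.inl (by rw [show ((2:ℂ)) = ((2:ℝ):ℂ) by norm_num, Complex.conj_ofReal])

lemma mul_apply_core (k : ℕ) (α : ℕ → ℝ) (a b : Fin (4*k+3)) (ha : (a:ℕ) ≠ 0)
    (hb : (b:ℕ) ≠ 0) :
    (Lmat k α * (Lmat k α)ᴴ) a b =
      1 + 2 * ((if ((a:ℕ)-1) % 2 = ((b:ℕ)-1) % 2
        then ∑ j ∈ range (2*k+1),
          Real.cos (α j - α ((j + (2*k+1 + ((a:ℕ)-1)/2 - ((b:ℕ)-1)/2) % (2*k+1)) % (2*k+1)))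
        else ∑ j ∈ range (2*k+1),
          Real.cos (α j + α ((j + (2*k+1 + ((a:ℕ)-1)/2 - ((b:ℕ)-1)/2) % (2*k+1)) % (2*k+1))) : ℝ) : ℂ) := by
  set m := 2*k+1 with hm
  set r := ((a:ℕ)-1)/2 with hrdef
  set r' := ((b:ℕ)-1)/2 with hr'def
  set e := (m + r - r') % m with hedef
  have hr : r < m := by have := a.isLt; omega
  have hr' : r' < m := by have := b.isLt; omega
  have h43 : 4*k+3 = 2*m+1 := by omega
  rw [Matrix.mul_apply]
  simp only [Matrix.conjTranspose_apply, Lmat_apply, Complex.star_def]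
  rw [Fin.sum_univ_eq_sum_range
    (fun l => ent k α (a:ℕ) l * (starRingEnd ℂ) (ent k α (b:ℕ) l)) (4*k+3)]
  rw [show Finset.range (4*k+3) = Finset.range (2*m+1) from by rw [h43], Finset.sum_range_succ'
    (fun l => ent k α (a:ℕ) l * (starRingEnd ℂ) (ent k α (b:ℕ) l)) (2*m)]
  rw [sum_pairs m (fun l => ent k α (a:ℕ) (l+1) * (starRingEnd ℂ) (ent k α (b:ℕ) (l+1)))]
  rw [ent_zero_right, ent_zero_right, _root_.map_one, mul_one]
  have key : ∀ s,
      ent k α (a:ℕ) (2*s+1) * (starRingEnd ℂ) (ent k α (b:ℕ) (2*s+1))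
        + ent k α (a:ℕ) (2*s+1+1) * (starRingEnd ℂ) (ent k α (b:ℕ) (2*s+1+1))
      = 2 * ((if ((a:ℕ)-1) % 2 = ((b:ℕ)-1) % 2
          then Real.cos (α ((s + (m-r)) % m) - α ((((s + (m-r)) % m) + e) % m))
          else Real.cos (α ((s + (m-r)) % m) + α ((((s + (m-r)) % m) + e) % m)) : ℝ) : ℂ) := by
    intro s
    have hh : 2*s+1+1 = 2*s+2 := rfl
    have hsr : s + m - r = s + (m - r) := by omega
    have hv2 : (s + m - r') % m = (((s + (m-r)) % m) + e) % m := by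
      rw [hedef, Nat.add_mod_mod, Nat.mod_add_mod,
        show s + (m-r) + (m + r - r') = (s + m - r') + m by omega, Nat.add_mod_right]
    rw [hh, ent_odd k α (a:ℕ) s ha, ent_odd k α (b:ℕ) s hb,
      ent_even k α (a:ℕ) s ha, ent_even k α (b:ℕ) s hb, hv2, hsr]
    rcases Nat.mod_two_eq_zero_or_one ((a:ℕ)-1) with hpa | hpa <;>
      rcases Nat.mod_two_eq_zero_or_one ((b:ℕ)-1) with hpb | hpb <;>
      simp only [hpa, hpb, Nat.reduceEqDiff, reduceIte, Complex.conj_conj]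
    · exact pair_minus _ _
    · exact pair_plus _ _
    · rw [add_comm]; exact pair_plus _ _
    · rw [add_comm]; exact pair_minus _ _
  rw [Finset.sum_congr rfl (fun s _ => key s)]
  by_cases hpp : ((a:ℕ)-1) % 2 = ((b:ℕ)-1) % 2
  · simp only [if_pos hpp]
    rw [sum_shift m (m-r) (fun j => 2 * ((Real.cos (α j - α ((j + e) % m)) : ℝ) : ℂ))]
    push_cast
    rw [Finset.mul_sum]
    ring
  · simp only [if_neg hpp]
    rw [sum_shift m (m-r) (fun j => 2 * ((Real.cos (α j + α ((j + e) % m)) : ℝ) : ℂ))]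
    push_cast
    rw [Finset.mul_sum]
    ring

lemma T_symm_plus (m e : ℕ) (α : ℕ → ℝ) (he : e ≤ m) :
    ∑ j ∈ range m, Real.cos (α j + α ((j + e) % m))
      = ∑ j ∈ range m, Real.cos (α j + α ((j + (m - e)) % m)) := by
  rw [← sum_shift m e (fun j => Real.cos (α j + α ((j + (m - e)) % m)))]
  apply Finset.sum_congr rfl
  intro j hj
  have h1 : ((j + e) % m + (m - e)) % m = j := by
    rw [Nat.mod_add_mod, show j + e + (m - e) = j + m from by omega, Nat.add_mod_right,
      Nat.mod_eq_of_lt (mem_range.mp hj)]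
  rw [h1, add_comm (α j)]

lemma T_symm_minus (m e : ℕ) (α : ℕ → ℝ) (he : e ≤ m) :
    ∑ j ∈ range m, Real.cos (α j - α ((j + e) % m))
      = ∑ j ∈ range m, Real.cos (α j - α ((j + (m - e)) % m)) := by
  rw [← sum_shift m e (fun j => Real.cos (α j - α ((j + (m - e)) % m)))]
  apply Finset.sum_congr rfl
  intro j hj
  have h1 : ((j + e) % m + (m - e)) % m = j := by
    rw [Nat.mod_add_mod, show j + e + (m - e) = j + m from by omega, Nat.add_mod_right,
      Nat.mod_eq_of_lt (mem_range.mp hj)]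
  rw [h1, ← neg_sub (α j), Real.cos_neg]

lemma Tplus_all (k : ℕ) (α : ℕ → ℝ)
    (h2 : ∑ j ∈ range (2*k+1), Real.cos (2 * α j) = -1/2)
    (h3 : ∀ i < k, ∑ j ∈ range (2*k+1), Real.cos (α j + α ((j + 1 + i) % (2*k+1))) = -1/2)
    (e : ℕ) (he : e < 2*k+1) :
    ∑ j ∈ range (2*k+1), Real.cos (α j + α ((j + e) % (2*k+1))) = -1/2 := by
  rcases Nat.eq_zero_or_pos e with he0 | hep
  · subst he0
    rw [← h2]
    apply Finset.sum_congr rfl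
    intro j hj
    rw [Nat.add_zero, Nat.mod_eq_of_lt (mem_range.mp hj), two_mul]
  rcases Nat.lt_or_ge e (k+1) with hek | hek
  · rw [← h3 (e-1) (by omega)]
    apply Finset.sum_congr rfl
    intro j _
    rw [show j + 1 + (e-1) = j + e from by omega]
  · rw [T_symm_plus (2*k+1) e α (by omega), ← h3 (2*k+1-e-1) (by omega)]
    apply Finset.sum_congr rfl
    intro j _
    rw [show j + 1 + (2*k+1-e-1) = j + (2*k+1-e) from by omega]

lemma Tminus_all (k : ℕ) (α : ℕ → ℝ)
    (h4 : ∀ i < k, ∑ j ∈ range (2*k+1), Real.cos (α j - α ((j + 1 + i) % (2*k+1))) = -1/2)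
    (e : ℕ) (he0 : 0 < e) (he : e < 2*k+1) :
    ∑ j ∈ range (2*k+1), Real.cos (α j - α ((j + e) % (2*k+1))) = -1/2 := by
  rcases Nat.lt_or_ge e (k+1) with hek | hek
  · rw [← h4 (e-1) (by omega)]
    apply Finset.sum_congr rfl
    intro j _
    rw [show j + 1 + (e-1) = j + e from by omega]
  · rw [T_symm_minus (2*k+1) e α (by omega), ← h4 (2*k+1-e-1) (by omega)]
    apply Finset.sum_congr rfl
    intro j _
    rw [show j + 1 + (2*k+1-e-1) = j + (2*k+1-e) from by omega]

lemma mod_sub_ne_zero (m x y : ℕ) (hx : x < m) (hy : y < m) (hxy : x ≠ y) :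
    (m + x - y) % m ≠ 0 := by
  rcases Nat.lt_or_ge x y with h | h
  · rw [Nat.mod_eq_of_lt (by omega)]; omega
  · rw [show m + x - y = m + (x - y) from by omega, Nat.add_mod_left,
      Nat.mod_eq_of_lt (by omega)]
    omega

/-- `L_N` (with `N = 4k+3`) is a complex Hadamard matrix if and only if the stated
trigonometric unitarity equations hold. -/
theorem Lmat_isCHM_iff (k : ℕ) (α : ℕ → ℝ) :
    IsCHM (Lmat k α) ↔
      ((∑ j ∈ Finset.range (2*k+1), Real.cos (α j) = -1/2) ∧
       (∑ j ∈ Finset.range (2*k+1), Real.cos (2 * α j) = -1/2) ∧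
       (∀ i < k, ∑ j ∈ Finset.range (2*k+1),
          Real.cos (α j + α ((j + 1 + i) % (2*k+1))) = -1/2) ∧
       (∀ i < k, ∑ j ∈ Finset.range (2*k+1),
          Real.cos (α j - α ((j + 1 + i) % (2*k+1))) = -1/2)) := by
  constructor
  · rintro ⟨-, heq⟩
    have hent : ∀ (a b : Fin (4*k+3)), a ≠ b → (Lmat k α * (Lmat k α)ᴴ) a b = 0 := by
      intro a b hab
      rw [heq, Matrix.smul_apply, Matrix.one_apply_ne hab, smul_zero]
    refine ⟨?_, ?_, ?_, ?_⟩
    · have h := hent ⟨1, by omega⟩ ⟨0, by omega⟩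
        (Fin.ne_of_val_ne (by show (1:ℕ) ≠ 0; omega))
      rw [mul_apply_col0 k α _ _ (by show (1:ℕ) ≠ 0; omega) rfl] at h
      have h' : (1:ℝ) + 2 * (∑ j ∈ range (2*k+1), Real.cos (α j)) = 0 := by
        exact_mod_cast h
      linarith
    · have h := hent ⟨1, by omega⟩ ⟨2, by omega⟩
        (Fin.ne_of_val_ne (by show (1:ℕ) ≠ 2; omega))
      rw [mul_apply_core k α _ _ (by show (1:ℕ) ≠ 0; omega)
        (by show (2:ℕ) ≠ 0; omega)] at h
      norm_num at h
      have hre : (1:ℝ) + 2 * (∑ j ∈ range (2*k+1), Real.cos (α j + α (j % (2*k+1)))) = 0 := by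
        have hc : (((1:ℝ) + 2 * (∑ j ∈ range (2*k+1),
            Real.cos (α j + α (j % (2*k+1)))) : ℝ) : ℂ) = 0 := by push_cast; exact h
        exact_mod_cast hc
      have hs : ∑ j ∈ range (2*k+1), Real.cos (α j + α (j % (2*k+1)))
          = ∑ j ∈ range (2*k+1), Real.cos (2 * α j) :=
        Finset.sum_congr rfl fun j hj => by
          rw [Nat.mod_eq_of_lt (mem_range.mp hj), ← two_mul]
      rw [hs] at hre
      linarith
    · intro i hi
      have h := hent ⟨2*i+3, by omega⟩ ⟨2, by omega⟩
        (Fin.ne_of_val_ne (by show 2*i+3 ≠ 2; omega))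
      rw [mul_apply_core k α _ _ (by show 2*i+3 ≠ 0; omega)
        (by show (2:ℕ) ≠ 0; omega)] at h
      norm_num at h
      have hre : (1:ℝ) + 2 * (∑ j ∈ range (2*k+1),
          Real.cos (α j + α ((j + (i+1)) % (2*k+1)))) = 0 := by
        have hc : (((1:ℝ) + 2 * (∑ j ∈ range (2*k+1),
            Real.cos (α j + α ((j + (i+1)) % (2*k+1)))) : ℝ) : ℂ) = 0 := by
          push_cast; exact h
        exact_mod_cast hc
      have hs : ∑ j ∈ range (2*k+1), Real.cos (α j + α ((j + (i+1)) % (2*k+1)))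
          = ∑ j ∈ range (2*k+1), Real.cos (α j + α ((j + 1 + i) % (2*k+1))) :=
        Finset.sum_congr rfl fun j hj => by
          rw [show j + (i+1) = j + 1 + i from by omega]
      rw [hs] at hre
      linarith
    · intro i hi
      have h := hent ⟨2*i+3, by omega⟩ ⟨1, by omega⟩
        (Fin.ne_of_val_ne (by show 2*i+3 ≠ 1; omega))
      rw [mul_apply_core k α _ _ (by show 2*i+3 ≠ 0; omega)
        (by show (1:ℕ) ≠ 0; omega)] at h
      norm_num at h
      have hre : (1:ℝ) + 2 * (∑ j ∈ range (2*k+1),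
          Real.cos (α j - α ((j + (i+1)) % (2*k+1)))) = 0 := by
        have hc : (((1:ℝ) + 2 * (∑ j ∈ range (2*k+1),
            Real.cos (α j - α ((j + (i+1)) % (2*k+1)))) : ℝ) : ℂ) = 0 := by
          push_cast; exact h
        exact_mod_cast hc
      have hs : ∑ j ∈ range (2*k+1), Real.cos (α j - α ((j + (i+1)) % (2*k+1)))
          = ∑ j ∈ range (2*k+1), Real.cos (α j - α ((j + 1 + i) % (2*k+1))) :=
        Finset.sum_congr rfl fun j hj => by
          rw [show j + (i+1) = j + 1 + i from by omega]
      rw [hs] at hre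
      linarith
  · rintro ⟨h1, h2, h3, h4⟩
    constructor
    · intro i j
      rw [Lmat_apply]
      exact abs_ent k α _ _
    · ext a b
      by_cases hab : a = b
      · subst hab
        rw [mul_apply_diag, Matrix.smul_apply, Matrix.one_apply_eq, smul_eq_mul, mul_one]
      · rw [Matrix.smul_apply, Matrix.one_apply_ne hab, smul_zero]
        by_cases ha0 : (a:ℕ) = 0
        · have hb0 : (b:ℕ) ≠ 0 := fun hb0 => hab (Fin.ext (by omega))
          rw [mul_apply_row0 k α a b ha0 hb0, h1]
          norm_num
        · by_cases hb0 : (b:ℕ) = 0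
          · rw [mul_apply_col0 k α a b ha0 hb0, h1]
            norm_num
          · rw [mul_apply_core k α a b ha0 hb0]
            by_cases hpp : ((a:ℕ)-1) % 2 = ((b:ℕ)-1) % 2
            · rw [if_pos hpp]
              have hrne : ((a:ℕ)-1)/2 ≠ ((b:ℕ)-1)/2 := by
                intro hre
                exact hab (Fin.ext (by omega))
              have he0 : (2*k+1 + ((a:ℕ)-1)/2 - ((b:ℕ)-1)/2) % (2*k+1) ≠ 0 :=
                mod_sub_ne_zero _ _ _ (by have := a.isLt; omega)
                  (by have := b.isLt; omega) hrne
              rw [Tminus_all k α h4 _ (Nat.pos_of_ne_zero he0)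
                (Nat.mod_lt _ (by omega))]
              norm_num
            · rw [if_neg hpp, Tplus_all k α h2 h3 _ (Nat.mod_lt _ (by omega))]
              norm_num
end
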